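/- arXiv:1411.7970 — 5 statements merged into one kernel-verified Lean document; each statement's English description precedes it below -/
import Mathlib

section
/- Let n ≥ 1, let C be a cyclic group of order n acting on a finite set X, and let p(t) ∈ ℤ[t] be a polynomial with integer coefficients such that the triple (X, p(t), C) exhibits the cyclic sieving phenomenon, i.e. for every c ∈ C and every complex root of unity ω whose multiplicative order equals the order of c, the number of fixed points |X^c| equals p(ω). Then for every positive divisor l of n and every integer i coprime to l, one has the congruence p(t^i) ≡ p(t) modulo the ideal generated by (t^l − 1) in ℤ[t]. -/
open Polynomial

/-- **Cyclic sieving phenomenon congruence.**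
If a cyclic group `C` of order `n ≥ 1` acts on a finite set `S` and `p ∈ ℤ[t]` is such that
the triple `(S, p, C)` exhibits the cyclic sieving phenomenon (the number of fixed points of
any `c ∈ C` equals the value of `p` at any complex root of unity whose multiplicative order
equals the order of `c`), then for every positive divisor `l` of `n` and every `i` coprime
to `l` one has `p(t^i) ≡ p(t)` modulo the ideal of `ℤ[t]` generated by `t^l - 1`. -/
theorem cyclic_sieving_congruence
    (n : ℕ) (hn : 1 ≤ n)
    (C : Type*) [Group C] [IsCyclic C] [Fintype C] (hC : Fintype.card C = n)
    (S : Type*) [Fintype S] [MulAction C S]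
    (p : Polynomial ℤ)
    (hsieve : ∀ (c : C) (ω : ℂ), orderOf ω = orderOf c →
      (Nat.card (MulAction.fixedBy S c) : ℂ) = Polynomial.aeval ω p)
    (l : ℕ) (hl : 0 < l) (hln : l ∣ n) (i : ℕ) (hi : Nat.Coprime i l) :
    p.comp (Polynomial.X ^ i) - p ∈
      Ideal.span {(Polynomial.X : Polynomial ℤ) ^ l - 1} := by
  rw [Ideal.mem_span_singleton]
  set q : Polynomial ℤ := p.comp (X ^ i) - p with hq
  have key : ∀ ω : ℂ, ω ^ l = 1 → aeval ω q = 0 := by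
    intro ω hω
    have hfin : IsOfFinOrder ω := isOfFinOrder_iff_pow_eq_one.2 ⟨l, hl, hω⟩
    set d := orderOf ω with hd
    have hdl : d ∣ l := orderOf_dvd_of_pow_eq_one hω
    have hdn : d ∣ n := hdl.trans hln
    obtain ⟨g, hg⟩ := IsCyclic.exists_ofOrder_eq_natCard (α := C)
    have hgord : orderOf g = n := by rwa [Nat.card_eq_fintype_card, hC] at hg
    have hcd : orderOf (g ^ (n / d)) = d := by
      rw [← hgord]
      exact orderOf_pow_orderOf_div (by rw [hgord]; omega) (by rwa [hgord])
    have hcop : Nat.Coprime d i := (Nat.Coprime.coprime_dvd_right hdl hi).symm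
    have hord2 : orderOf (ω ^ i) = d := hcop.orderOf_pow
    have e1 := hsieve (g ^ (n / d)) ω (by rw [hcd])
    have e2 := hsieve (g ^ (n / d)) (ω ^ i) (by rw [hcd, hord2])
    have hpe : aeval (ω ^ i) p = aeval ω p := by rw [← e1, ← e2]
    simp [hq, aeval_comp, hpe]
  have hmonic : ((X : Polynomial ℤ) ^ l - 1).Monic := monic_X_pow_sub_C 1 hl.ne'
  rw [← Polynomial.map_dvd_map (Int.castRingHom ℂ) Int.cast_injective hmonic]
  obtain ⟨ζ, hζ⟩ : ∃ ζ : ℂ, IsPrimitiveRoot ζ l := ⟨_, Complex.isPrimitiveRoot_exp l hl.ne'⟩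
  have hfact : ((X : Polynomial ℤ) ^ l - 1).map (Int.castRingHom ℂ)
      = ∏ μ ∈ nthRootsFinset l (1 : ℂ), (X - Polynomial.C μ) := by
    rw [Polynomial.map_sub, Polynomial.map_pow, Polynomial.map_X, Polynomial.map_one]
    exact X_pow_sub_one_eq_prod hl hζ
  rw [hfact]
  apply Finset.prod_dvd_of_coprime
  · intro a ha b hb hab
    exact isCoprime_X_sub_C_of_isUnit_sub (sub_ne_zero_of_ne hab).isUnit
  · intro μ hμ
    rw [dvd_iff_isRoot, IsRoot.def, eval_map]
    exact key μ ((mem_nthRootsFinset hl (1 : ℂ)).1 hμ)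
end

section
/- Let (C, ⊗, 1) be an additive symmetric monoidal category (in particular having finite biproducts), let l ≥ 1 be an integer, and let b be an object of C with b^{⊗l} ≅ 1. For a polynomial p = a₀ + a₁t + ⋯ + a_n t^n with non-negative integer coefficients, write p(b) := 1^{⊕a₀} ⊕ b^{⊕a₁} ⊕ (b^{⊗2})^{⊕a₂} ⊕ ⋯ ⊕ (b^{⊗n})^{⊕a_n}. If p, q ∈ ℕ[t] satisfy p ≡ q modulo the ideal generated by (t^l − 1) in ℤ[t], then p(b) ≅ q(b) in C. -/
open CategoryTheory CategoryTheory.Limits CategoryTheory.MonoidalCategory Polynomial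

universe v u

variable {C : Type u} [Category.{v} C] [MonoidalCategory C] [Preadditive C]
  [HasFiniteBiproducts C]

/-- The `j`-fold tensor power `b^{⊗j}` of an object `b`. -/
def tensorPow (b : C) : ℕ → C
  | 0 => 𝟙_ C
  | j + 1 => tensorPow b j ⊗ b

/-- The evaluation `p(b) = 𝟙^{⊕a₀} ⊕ b^{⊕a₁} ⊕ (b^{⊗2})^{⊕a₂} ⊕ ⋯` of a polynomial
`p = a₀ + a₁ t + ⋯ + aₙ tⁿ` with natural number coefficients at an object `b`. -/
noncomputable def evalPoly (p : Polynomial ℕ) (b : C) : C :=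
  ⨁ fun i : Fin (p.natDegree + 1) => ⨁ fun _ : Fin (p.coeff i.1) => tensorPow b i.1

/-- `b^{⊗(m+n)} ≅ b^{⊗m} ⊗ b^{⊗n}`. -/
def tensorPowAdd (b : C) (m : ℕ) : (n : ℕ) → (tensorPow b (m + n) ≅ tensorPow b m ⊗ tensorPow b n)
  | 0 => (ρ_ _).symm
  | n + 1 => (whiskerRightIso (tensorPowAdd b m n) b) ≪≫ (α_ _ _ _)

/-- If `b^{⊗l} ≅ 𝟙` then `b^{⊗j} ≅ b^{⊗(j % l)}`. -/
noncomputable def tensorPowMod (b : C) (l : ℕ) (hl : 0 < l) (e : tensorPow b l ≅ 𝟙_ C) :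
    (j : ℕ) → (tensorPow b j ≅ tensorPow b (j % l))
  | j =>
    if h : j < l then eqToIso (by rw [Nat.mod_eq_of_lt h])
    else by
      have hlj : l ≤ j := le_of_not_gt h
      have hd : j - l < j := Nat.sub_lt (lt_of_lt_of_le hl hlj) hl
      exact (eqToIso (by rw [Nat.sub_add_cancel hlj] : tensorPow b j = tensorPow b ((j - l) + l)))
        ≪≫ tensorPowAdd b (j - l) l ≪≫ (whiskerLeftIso _ e) ≪≫ (ρ_ _)
        ≪≫ tensorPowMod b l hl e (j - l)
        ≪≫ eqToIso (by rw [← Nat.add_mod_right (j - l) l, Nat.sub_add_cancel hlj])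
  termination_by j => j

lemma card_sigma_fiber {N : ℕ} (c : Fin N → ℕ) (P : Fin N → Prop) [DecidablePred P] :
    Fintype.card {x : Σ i : Fin N, Fin (c i) // P x.1}
      = ∑ i : Fin N, if P i then c i else 0 := by
  rw [Fintype.card_congr (Equiv.subtypeSigmaEquiv (fun i => Fin (c i)) P)]
  rw [Fintype.card_sigma]
  simp only [Fintype.card_fin]
  rw [← Finset.sum_filter]
  rw [← Finset.sum_subtype_eq_sum_filter (fun i => c i) (s := Finset.univ)]
  exact Finset.sum_congr (by ext x; simp) (fun _ _ => rfl)

lemma sum_filter_mod {M : Type*} [AddCommMonoid M] (c : ℕ → M) (l r : ℕ) (hr : r < l) : (K : ℕ) →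
    ∑ i ∈ Finset.range (K * l), (if i % l = r then c i else 0) = ∑ k ∈ Finset.range K, c (r + k * l)
  | 0 => by simp
  | K + 1 => by
    have hml : (K + 1) * l = K * l + l := by ring
    rw [hml, Finset.sum_range_add, sum_filter_mod c l r hr K, Finset.sum_range_succ]
    congr 1
    have : ∀ j ∈ Finset.range l, (if (K * l + j) % l = r then c (K * l + j) else 0)
        = if j = r then c (r + K * l) else 0 := by
      intro j hj
      simp only [Finset.mem_range] at hj
      rw [Nat.add_comm (K * l) j, Nat.add_mul_mod_self_right, Nat.mod_eq_of_lt hj]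
      by_cases h : j = r <;> simp [h, Nat.add_comm]
    rw [Finset.sum_congr rfl this, Finset.sum_ite_eq' (Finset.range l) r (fun _ => c (r + K * l))]
    simp [hr]

lemma telescope_coeff (a : Polynomial ℤ) (l r : ℕ) (hr : r < l) : (K : ℕ) →
    ∑ k ∈ Finset.range (K + 1), (a * X ^ l - a).coeff (r + k * l) = - a.coeff (r + K * l)
  | 0 => by
    simp [Polynomial.coeff_mul_X_pow', Nat.not_le.mpr hr]
  | K + 1 => by
    rw [Finset.sum_range_succ, telescope_coeff a l r hr K]
    rw [Polynomial.coeff_sub, Polynomial.coeff_mul_X_pow']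
    have hml : (K + 1) * l = K * l + l := by ring
    have h1 : l ≤ r + (K + 1) * l := by omega
    rw [if_pos h1]
    have h2 : r + (K + 1) * l - l = r + K * l := by omega
    rw [h2]; ring

/-- `p(b)` is isomorphic to the canonical form `⨁_{r<l} (b^{⊗r})^{⊕ (∑_{k<K} a_{r+kl})}`. -/
lemma evalPolyCanonIso (l : ℕ) (hl : 0 < l) (b : C) (e : tensorPow b l ≅ 𝟙_ C)
    (p : Polynomial ℕ) (K : ℕ) (hK : p.natDegree + 1 ≤ K * l) :
    Nonempty (evalPoly p b ≅
      ⨁ fun y : Σ r : Fin l, Fin (∑ k ∈ Finset.range K, p.coeff (r.1 + k * l)) =>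
        tensorPow b y.1.1) := by
  set N := p.natDegree + 1 with hN
  set c : Fin N → ℕ := fun i => p.coeff i.1 with hc
  set cnt : Fin l → ℕ := fun r => ∑ k ∈ Finset.range K, p.coeff (r.1 + k * l) with hcnt
  have iso1 : evalPoly p b ≅ ⨁ fun x : Σ i : Fin N, Fin (c i) => tensorPow b x.1.1 :=
    biproductBiproductIso (fun i : Fin N => Fin (c i)) (fun i _ => tensorPow b i.1)
  have iso2 : (⨁ fun x : Σ i : Fin N, Fin (c i) => tensorPow b x.1.1)
      ≅ ⨁ fun x : Σ i : Fin N, Fin (c i) => tensorPow b (x.1.1 % l) :=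
    biproduct.mapIso fun x => tensorPowMod b l hl e x.1.1
  let f : (Σ i : Fin N, Fin (c i)) → Fin l := fun x => ⟨x.1.1 % l, Nat.mod_lt _ hl⟩
  have hcard : ∀ r : Fin l,
      Fintype.card {x : Σ i : Fin N, Fin (c i) // f x = r}
        = Fintype.card {y : Σ r' : Fin l, Fin (cnt r') // y.1 = r} := by
    intro r
    have h1 : Fintype.card {x : Σ i : Fin N, Fin (c i) // f x = r}
        = ∑ i : Fin N, if i.1 % l = r.1 then c i else 0 := by
      rw [Fintype.card_congr (Equiv.subtypeEquivRight (q := fun x => x.1.1 % l = r.1)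
        (fun x => by simp [f, Fin.ext_iff]))]
      exact card_sigma_fiber c (fun i => i.1 % l = r.1)
    have h2 : Fintype.card {y : Σ r' : Fin l, Fin (cnt r') // y.1 = r} = cnt r := by
      rw [card_sigma_fiber cnt (fun r' => r' = r)]
      simp
    rw [h1, h2]
    calc ∑ i : Fin N, (if i.1 % l = r.1 then c i else 0)
        = ∑ i ∈ Finset.range N, (if i % l = r.1 then p.coeff i else 0) :=
          Fin.sum_univ_eq_sum_range (fun m => if m % l = r.1 then p.coeff m else 0) N
      _ = ∑ i ∈ Finset.range (K * l), (if i % l = r.1 then p.coeff i else 0) := by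
          refine Finset.sum_subset (Finset.range_subset_range.mpr hK) ?_
          intro i hi hni
          simp only [Finset.mem_range, not_lt, hN] at hni
          simp [Polynomial.coeff_eq_zero_of_natDegree_lt (show p.natDegree < i by omega)]
      _ = cnt r := sum_filter_mod (fun m => p.coeff m) l r.1 r.isLt K
  let eqv : (Σ i : Fin N, Fin (c i)) ≃ (Σ r' : Fin l, Fin (cnt r')) :=
    Equiv.ofFiberEquiv (f := f) (g := Sigma.fst) fun r => Fintype.equivOfCardEq (hcard r)
  have heqv : ∀ x, (eqv x).1.1 = x.1.1 % l := fun x =>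
    congrArg Fin.val (Equiv.ofFiberEquiv_map _ x)
  have iso3 : (⨁ fun x : Σ i : Fin N, Fin (c i) => tensorPow b (x.1.1 % l))
      ≅ ⨁ fun y : Σ r' : Fin l, Fin (cnt r') => tensorPow b y.1.1 :=
    biproduct.whiskerEquiv eqv fun x => eqToIso (by rw [heqv x])
  exact ⟨iso1 ≪≫ iso2 ≪≫ iso3⟩

/-- If `(C, ⊗, 𝟙)` is an additive symmetric monoidal category, `b` is an object with
`b^{⊗l} ≅ 𝟙`, and `p, q ∈ ℕ[t]` are congruent modulo the ideal of `ℤ[t]` generated by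
`t^l - 1`, then `p(b) ≅ q(b)`. -/
theorem evalPoly_iso_of_congruent
    [SymmetricCategory C] [MonoidalPreadditive C]
    (l : ℕ) (hl : 0 < l) (b : C) (hb : Nonempty (tensorPow b l ≅ 𝟙_ C))
    (p q : Polynomial ℕ)
    (hpq : p.map (Nat.castRingHom ℤ) - q.map (Nat.castRingHom ℤ) ∈
      Ideal.span {(X : Polynomial ℤ) ^ l - 1}) :
    Nonempty (evalPoly p b ≅ evalPoly q b) := by
  obtain ⟨e⟩ := hb
  obtain ⟨a, ha⟩ := Ideal.mem_span_singleton'.mp hpq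
  set M := max (max p.natDegree q.natDegree) a.natDegree with hM
  set K := M + 2 with hKdef
  have hKK : K ≤ K * l := Nat.le_mul_of_pos_right K hl
  have hcnt : ∀ r : Fin l,
      (∑ k ∈ Finset.range K, p.coeff (r.1 + k * l))
        = ∑ k ∈ Finset.range K, q.coeff (r.1 + k * l) := by
    intro r
    have key := telescope_coeff a l r.1 r.isLt (M + 1)
    have h0 : a.coeff (r.1 + (M + 1) * l) = 0 := by
      apply Polynomial.coeff_eq_zero_of_natDegree_lt
      have h1 : M + 1 ≤ (M + 1) * l := Nat.le_mul_of_pos_right _ hl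
      have h2 : a.natDegree ≤ M := le_max_right _ _
      omega
    have hsum : ∑ k ∈ Finset.range K, (a * X ^ l - a).coeff (r.1 + k * l) = 0 := by
      rw [hKdef]
      rw [show M + 2 = (M + 1) + 1 from rfl, key, h0, neg_zero]
    have he : a * X ^ l - a
        = p.map (Nat.castRingHom ℤ) - q.map (Nat.castRingHom ℤ) := by
      rw [← ha]; ring
    rw [he] at hsum
    have hsum2 : ∑ k ∈ Finset.range K,
        ((p.coeff (r.1 + k * l) : ℤ) - (q.coeff (r.1 + k * l) : ℤ)) = 0 := by
      simpa [Polynomial.coeff_sub, Polynomial.coeff_map] using hsum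
    rw [Finset.sum_sub_distrib, sub_eq_zero] at hsum2
    exact_mod_cast hsum2
  obtain ⟨i1⟩ := evalPolyCanonIso l hl b e p K
    (by have : p.natDegree ≤ M := le_trans (le_max_left _ _) (le_max_left _ _); omega)
  obtain ⟨i2⟩ := evalPolyCanonIso l hl b e q K
    (by have : q.natDegree ≤ M := le_trans (le_max_right _ _) (le_max_left _ _); omega)
  have mid : (⨁ fun y : Σ r : Fin l, Fin (∑ k ∈ Finset.range K, p.coeff (r.1 + k * l)) =>
        tensorPow b y.1.1)
      ≅ ⨁ fun y : Σ r : Fin l, Fin (∑ k ∈ Finset.range K, q.coeff (r.1 + k * l)) =>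
        tensorPow b y.1.1 :=
    biproduct.whiskerEquiv (Equiv.sigmaCongrRight fun r => finCongr (hcnt r))
      (fun y => eqToIso (by cases y; rfl))
  exact ⟨i1 ≪≫ mid ≪≫ i2.symm⟩
end

section
/- Let m ≤ n be non-negative integers, let l be a positive divisor of n, and let i be an integer coprime to l. Then the Gaussian polynomial satisfies the congruence (n choose m)_{t^i} ≡ (n choose m)_t modulo the ideal generated by (t^l − 1) in ℤ[t], where (n choose m)_{t^i} denotes the polynomial obtained by substituting t^i for t. -/
open Polynomial Finset

private lemma one_sub_X_pow_ne_zero {d : ℕ} (hd : 0 < d) : (1 - X ^ d : Polynomial ℂ) ≠ 0 := by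
  intro h
  have h0 := congrArg (eval 0) h
  simp [zero_pow hd.ne'] at h0

private lemma one_sub_X_pow_mul (d c : ℕ) :
    (1 - X ^ (d * c) : Polynomial ℂ) = (1 - X ^ d) * ∑ r ∈ range c, (X ^ d) ^ r := by
  have h := geom_sum_mul (X ^ d : Polynomial ℂ) c
  rw [← pow_mul] at h
  linear_combination h

private lemma filter_dvd_succ (d m : ℕ) (hd : 0 < d) :
    (range m).filter (fun j => d ∣ (j + 1)) = (range (m / d)).image (fun s => d * s + (d - 1)) := by
  ext j
  simp only [mem_filter, mem_range, mem_image]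
  constructor
  · rintro ⟨hj, s, hs⟩
    rcases s with _ | s
    · omega
    have hds : d * (s + 1) = d * s + d := by ring
    refine ⟨s, ?_, by omega⟩
    rw [Nat.lt_iff_add_one_le, Nat.le_div_iff_mul_le hd]
    have h1 : (s + 1) * d = d * s + d := by ring
    rw [h1]; omega
  · rintro ⟨s, hs, rfl⟩
    rw [Nat.lt_iff_add_one_le, Nat.le_div_iff_mul_le hd] at hs
    have h1 : (s + 1) * d = d * s + d := by ring
    rw [h1] at hs
    have h2 : d * (s + 1) = d * s + d := by ring
    exact ⟨by omega, ⟨s + 1, by omega⟩⟩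

private lemma filter_dvd (d m : ℕ) (hd : 0 < d) :
    (range m).filter (fun j => d ∣ j) = (range ((m + d - 1) / d)).image (fun s => d * s) := by
  ext j
  simp only [mem_filter, mem_range, mem_image]
  constructor
  · rintro ⟨hj, s, rfl⟩
    refine ⟨s, ?_, rfl⟩
    rw [Nat.lt_iff_add_one_le, Nat.le_div_iff_mul_le hd]
    have h1 : (s + 1) * d = d * s + d := by ring
    rw [h1]; omega
  · rintro ⟨s, hs, rfl⟩
    rw [Nat.lt_iff_add_one_le, Nat.le_div_iff_mul_le hd] at hs
    have h1 : (s + 1) * d = d * s + d := by ring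
    rw [h1] at hs
    exact ⟨by omega, ⟨s, rfl⟩⟩

private lemma eval_gauss (n m d : ℕ) (hmn : m ≤ n) (hd : 0 < d) (hdn : d ∣ n)
    (G : Polynomial ℂ)
    (hG : G * ∏ j ∈ range m, ((1 : Polynomial ℂ) - X ^ (j + 1))
        = ∏ j ∈ range m, ((1 : Polynomial ℂ) - X ^ (n - j)))
    (ζ : ℂ) (hζ : IsPrimitiveRoot ζ d) :
    G.eval ζ = if d ∣ m then ((n / d).choose (m / d) : ℂ) else 0 := by
  have hζd : ζ ^ d = 1 := hζ.pow_eq_one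
  obtain ⟨k, hk⟩ := hdn
  have hkd : n / d = k := by rw [hk, Nat.mul_div_cancel_left _ hd]
  set q := m / d with hq
  set c := (m + d - 1) / d with hc
  -- the "inert" parts of the products
  set Pd : Polynomial ℂ := ∏ j ∈ (range m).filter (fun j => ¬ d ∣ (j + 1)), (1 - X ^ (j + 1))
    with hPd
  set Pn : Polynomial ℂ := ∏ j ∈ (range m).filter (fun j => ¬ d ∣ j), (1 - X ^ (n - j)) with hPn
  set DS : Polynomial ℂ := ∏ s ∈ range q, ∑ r ∈ range (s + 1), ((X : Polynomial ℂ) ^ d) ^ r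
    with hDS
  set NS : Polynomial ℂ := ∏ s ∈ range c, ∑ r ∈ range (n / d - s), ((X : Polynomial ℂ) ^ d) ^ r
    with hNS
  have hinj1 : ∀ x ∈ range q, ∀ y ∈ range q, d * x + (d - 1) = d * y + (d - 1) → x = y := by
    intro x _ y _ h
    exact Nat.eq_of_mul_eq_mul_left hd (by omega)
  have hinj2 : ∀ x ∈ range c, ∀ y ∈ range c, d * x = d * y → x = y := by
    intro x _ y _ h
    exact Nat.eq_of_mul_eq_mul_left hd (by omega)
  have hck : c ≤ k := by
    rw [hc, Nat.lt_iff_add_one_le] at *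
    have h1 : m + d - 1 ≤ d * k + (d - 1) := by omega
    calc (m + d - 1) / d ≤ (d * k + (d - 1)) / d := Nat.div_le_div_right h1
    _ = k + (d - 1) / d := Nat.mul_add_div hd k (d - 1)
    _ = k := by rw [Nat.div_eq_of_lt (by omega)]; omega
  -- denominator decomposition
  have hDen : ∏ j ∈ range m, ((1 : Polynomial ℂ) - X ^ (j + 1))
      = (1 - X ^ d) ^ q * (DS * Pd) := by
    rw [← prod_filter_mul_prod_filter_not (range m) (fun j => d ∣ (j + 1)),
      filter_dvd_succ d m hd, prod_image hinj1]
    have hterm : ∀ s ∈ range q, ((1 : Polynomial ℂ) - X ^ (d * s + (d - 1) + 1))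
        = (1 - X ^ d) * ∑ r ∈ range (s + 1), ((X : Polynomial ℂ) ^ d) ^ r := by
      intro s _
      have h1 : d * s + (d - 1) + 1 = d * (s + 1) := by
        have : d * (s + 1) = d * s + d := by ring
        omega
      rw [h1, one_sub_X_pow_mul]
    rw [prod_congr rfl hterm, prod_mul_distrib, prod_const, card_range, hDS, hPd, mul_assoc]
  -- numerator decomposition
  have hNum : ∏ j ∈ range m, ((1 : Polynomial ℂ) - X ^ (n - j))
      = (1 - X ^ d) ^ c * (NS * Pn) := by
    rw [← prod_filter_mul_prod_filter_not (range m) (fun j => d ∣ j),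
      filter_dvd d m hd, prod_image hinj2]
    have hterm : ∀ s ∈ range c, ((1 : Polynomial ℂ) - X ^ (n - d * s))
        = (1 - X ^ d) * ∑ r ∈ range (n / d - s), ((X : Polynomial ℂ) ^ d) ^ r := by
      intro s hs
      simp only [mem_range] at hs
      have hsk : s ≤ k := le_trans (le_of_lt hs) hck
      have h1 : n - d * s = d * (n / d - s) := by
        rw [hkd, hk]
        obtain ⟨u, hu⟩ := Nat.exists_eq_add_of_le hsk
        have h2 : d * (s + u) = d * s + d * u := by ring
        have h3 : k - s = u := by omega
        rw [h3, hu, h2]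
        omega
      rw [h1, one_sub_X_pow_mul]
    rw [prod_congr rfl hterm, prod_mul_distrib, prod_const, card_range, hNS, hPn, mul_assoc]
  rw [hDen, hNum] at hG
  -- evaluations
  have evDS : DS.eval ζ = ((Nat.factorial q) : ℂ) := by
    rw [hDS, eval_prod]
    have h1 : ∀ s ∈ range q, eval ζ (∑ r ∈ range (s + 1), ((X : Polynomial ℂ) ^ d) ^ r)
        = ((s + 1 : ℕ) : ℂ) := by
      intro s _
      rw [eval_finset_sum]
      simp [hζd]
    rw [prod_congr rfl h1, ← Nat.cast_prod, Finset.prod_range_add_one_eq_factorial]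
  have evNS : NS.eval ζ = ((n / d).descFactorial c : ℂ) := by
    rw [hNS, eval_prod]
    have h1 : ∀ s ∈ range c, eval ζ (∑ r ∈ range (n / d - s), ((X : Polynomial ℂ) ^ d) ^ r)
        = ((n / d - s : ℕ) : ℂ) := by
      intro s _
      rw [eval_finset_sum]
      simp [hζd]
    rw [prod_congr rfl h1, ← Nat.cast_prod, ← Nat.descFactorial_eq_prod_range]
  have evPd_ne : Pd.eval ζ ≠ 0 := by
    rw [hPd, eval_prod]
    apply Finset.prod_ne_zero_iff.2
    intro j hj
    simp only [mem_filter, mem_range] at hj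
    simp only [eval_sub, eval_one, eval_pow, eval_X]
    intro h0
    exact hj.2 ((hζ.pow_eq_one_iff_dvd (j + 1)).1 (by linear_combination -h0))
  by_cases hm : d ∣ m
  · -- main case
    rw [if_pos hm]
    obtain ⟨k', hk'⟩ := hm
    have hqk : q = k' := by rw [hq, hk', Nat.mul_div_cancel_left _ hd]
    have hcq : c = q := by
      rw [hc, hq, hk']
      have h1 : d * k' + d - 1 = d * k' + (d - 1) := by omega
      rw [h1, Nat.mul_add_div hd, Nat.div_eq_of_lt (by omega), Nat.mul_div_cancel_left _ hd]
      omega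
    rw [hcq] at hG
    have hcancel : G * (DS * Pd) = NS * Pn :=
      mul_left_cancel₀ (pow_ne_zero q (one_sub_X_pow_ne_zero hd)) (by linear_combination hG)
    -- Pn(ζ) = Pd(ζ)
    have hdnm : d ∣ n - m := Nat.dvd_sub ⟨k, hk⟩ ⟨k', hk'⟩
    have hPnPd : Pn.eval ζ = Pd.eval ζ := by
      rw [hPd, hPn, eval_prod, eval_prod]
      apply Finset.prod_nbij' (fun j => m - 1 - j) (fun j => m - 1 - j)
      · intro a ha
        simp only [mem_filter, mem_range] at ha ⊢
        refine ⟨by omega, fun hcon => ha.2 ?_⟩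
        have h1 : m - 1 - a + 1 = m - a := by omega
        rw [h1] at hcon
        have := Nat.dvd_sub ⟨k', hk'⟩ hcon
        have h2 : m - (m - a) = a := by omega
        rwa [h2] at this
      · intro a ha
        simp only [mem_filter, mem_range] at ha ⊢
        refine ⟨by omega, fun hcon => ha.2 ?_⟩
        have h1 : m - 1 - a = m - (a + 1) := by omega
        rw [h1] at hcon
        have := Nat.dvd_sub ⟨k', hk'⟩ hcon
        have h2 : m - (m - (a + 1)) = a + 1 := by omega
        rwa [h2] at this
      · intro a ha
        simp only [mem_filter, mem_range] at ha
        omega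
      · intro a ha
        simp only [mem_filter, mem_range] at ha
        omega
      · intro a ha
        simp only [mem_filter, mem_range] at ha
        simp only [eval_sub, eval_one, eval_pow, eval_X]
        have h1 : n - a = (n - m) + (m - 1 - a + 1) := by omega
        rw [h1, pow_add, (hζ.pow_eq_one_iff_dvd (n - m)).2 hdnm, one_mul]
    have hval := congrArg (eval ζ) hcancel
    rw [eval_mul, eval_mul, eval_mul, evDS, evNS, hPnPd, hcq] at hval
    have hfact : ((n / d).descFactorial q : ℂ) = ((Nat.factorial q) : ℂ) * ((n / d).choose q : ℂ) := by
      rw [← Nat.cast_mul, Nat.descFactorial_eq_factorial_mul_choose]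
    rw [hfact] at hval
    have hq_ne : ((Nat.factorial q) : ℂ) ≠ 0 := Nat.cast_ne_zero.2 (Nat.factorial_ne_zero q)
    have hqm : m / d = q := hq.symm
    have h3 : G.eval ζ * ((Nat.factorial q) : ℂ) * Pd.eval ζ
        = (((Nat.factorial q) : ℂ) * ((n / d).choose q : ℂ)) * Pd.eval ζ := by linear_combination hval
    have h4 := mul_right_cancel₀ evPd_ne h3
    have h5 : G.eval ζ * ((Nat.factorial q) : ℂ) = ((n / d).choose q : ℂ) * ((Nat.factorial q) : ℂ) := by
      linear_combination h4
    have h6 := mul_right_cancel₀ hq_ne h5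
    rw [h6, hq]
  · -- degenerate case: G(ζ) = 0
    rw [if_neg hm]
    have hcq : c = q + 1 := by
      have hmod := Nat.div_add_mod m d
      rw [← hq] at hmod
      have hr : m % d ≠ 0 := fun h => hm (Nat.dvd_of_mod_eq_zero h)
      have hrd : m % d < d := Nat.mod_lt _ hd
      have h1 : m + d - 1 = d * (q + 1) + (m % d - 1) := by
        have h2 : d * (q + 1) = d * q + d := by ring
        omega
      rw [hc, h1, Nat.mul_add_div hd, Nat.div_eq_of_lt (by omega)]
    rw [hcq, pow_succ] at hG
    have hcancel : G * (DS * Pd) = (1 - X ^ d) * (NS * Pn) :=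
      mul_left_cancel₀ (pow_ne_zero q (one_sub_X_pow_ne_zero hd)) (by linear_combination hG)
    have hval := congrArg (eval ζ) hcancel
    rw [eval_mul, eval_mul, eval_mul, eval_mul, evDS, eval_sub, eval_one, eval_pow, eval_X,
      hζd, sub_self, zero_mul] at hval
    have hq_ne : ((Nat.factorial q) : ℂ) ≠ 0 := Nat.cast_ne_zero.2 (Nat.factorial_ne_zero q)
    have h0 : G.eval ζ * (((Nat.factorial q) : ℂ) * Pd.eval ζ) = 0 := hval
    rcases mul_eq_zero.1 h0 with h | h
    · exact h
    · exact absurd h (mul_ne_zero hq_ne evPd_ne)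

/-- **Congruence for Gaussian polynomials.**
Let `m ≤ n`, let `l` be a positive divisor of `n` and let `i` be coprime to `l`.  Let
`g ∈ ℤ[t]` be the Gaussian polynomial `(n choose m)_t`, i.e. the (unique) polynomial with
`g * (1-t)(1-t²)⋯(1-t^m) = (1-t^n)(1-t^{n-1})⋯(1-t^{n-m+1})`.  Then
`g(t^i) ≡ g(t)` modulo the ideal of `ℤ[t]` generated by `t^l - 1`. -/
theorem gaussian_polynomial_congruence
    (n m : ℕ) (hmn : m ≤ n)
    (l : ℕ) (hl : 0 < l) (hln : l ∣ n)
    (i : ℕ) (hi : Nat.Coprime i l)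
    (g : Polynomial ℤ)
    (hg : g * ∏ j ∈ Finset.range m, ((1 : Polynomial ℤ) - X ^ (j + 1))
        = ∏ j ∈ Finset.range m, ((1 : Polynomial ℤ) - X ^ (n - j))) :
    g.comp (X ^ i) - g ∈ Ideal.span {(X : Polynomial ℤ) ^ l - 1} := by
  rw [Ideal.mem_span_singleton]
  have hmonic : ((X : Polynomial ℤ) ^ l - 1).Monic := by
    have := monic_X_pow_sub_C (1 : ℤ) hl.ne'
    simpa using this
  rw [← Polynomial.map_dvd_map (Int.castRingHom ℂ) (RingHom.injective_int _) hmonic]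
  set φ := Int.castRingHom ℂ
  set G : Polynomial ℂ := g.map φ with hGdef
  have hmap1 : ((X : Polynomial ℤ) ^ l - 1).map φ = (X : Polynomial ℂ) ^ l - 1 := by
    simp [Polynomial.map_sub, Polynomial.map_pow, Polynomial.map_one, Polynomial.map_X]
  have hmap2 : (g.comp (X ^ i) - g).map φ = G.comp (X ^ i) - G := by
    rw [Polynomial.map_sub, Polynomial.map_comp]
    simp [Polynomial.map_pow, Polynomial.map_X, hGdef]
  rw [hmap1, hmap2]
  -- mapped defining equation
  have hGC : G * ∏ j ∈ range m, ((1 : Polynomial ℂ) - X ^ (j + 1))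
      = ∏ j ∈ range m, ((1 : Polynomial ℂ) - X ^ (n - j)) := by
    have := congrArg (Polynomial.map φ) hg
    simpa [Polynomial.map_mul, Polynomial.map_prod, Polynomial.map_sub, Polynomial.map_pow,
      Polynomial.map_one, Polynomial.map_X] using this
  -- root-by-root divisibility
  obtain ⟨μ, hμ⟩ : ∃ μ : ℂ, IsPrimitiveRoot μ l := ⟨_, Complex.isPrimitiveRoot_exp l hl.ne'⟩
  rw [X_pow_sub_one_eq_prod hl hμ]
  apply Finset.prod_dvd_of_coprime
  · intro a ha b hb hab
    exact isCoprime_X_sub_C_of_isUnit_sub (sub_ne_zero.2 hab).isUnit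
  · intro ζ hζmem
    rw [dvd_iff_isRoot]
    have hζl : ζ ^ l = 1 := (mem_nthRootsFinset hl 1).1 hζmem
    have hfin : IsOfFinOrder ζ := isOfFinOrder_iff_pow_eq_one.2 ⟨l, hl, hζl⟩
    set d := orderOf ζ with hdd
    have hd : 0 < d := hfin.orderOf_pos
    have hζprim : IsPrimitiveRoot ζ d := IsPrimitiveRoot.orderOf ζ
    have hdl : d ∣ l := orderOf_dvd_of_pow_eq_one hζl
    have hdn : d ∣ n := dvd_trans hdl hln
    have hid : Nat.Coprime i d := Nat.Coprime.coprime_dvd_right hdl hi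
    have hζiprim : IsPrimitiveRoot (ζ ^ i) d := hζprim.pow_of_coprime i hid
    have h1 := eval_gauss n m d hmn hd hdn G hGC ζ hζprim
    have h2 := eval_gauss n m d hmn hd hdn G hGC (ζ ^ i) hζiprim
    simp only [IsRoot, eval_sub, eval_comp, eval_pow, eval_X]
    rw [h1, h2, sub_self]
end

section
/- Let p₁, …, p_s be pairwise distinct prime numbers and r₁, …, r_s positive integers. Then in the polynomial ring ℤ[t], the intersection of the principal ideals generated by (1 − t^{p_i^{r_i}}) for i = 1, …, s equals the principal ideal generated by (1 − t)·∏_{i=1}^{s} (1 + t + t² + ⋯ + t^{p_i^{r_i} − 1}). -/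
open Polynomial Finset

private noncomputable def g (n : ℕ) : Polynomial ℤ := ∑ j ∈ Finset.range n, X ^ j

private lemma one_sub_eq (n : ℕ) : (1 : Polynomial ℤ) - X ^ n = (1 - X) * g n := by
  have := geom_sum_mul (X : Polynomial ℤ) n
  unfold g
  linear_combination this

/-- Common divisors of `X^a - 1` and `X^b - 1` divide `X^(gcd a b) - 1`. -/
private lemma dvd_gcd_pow (d : Polynomial ℤ) :
    ∀ a b : ℕ, d ∣ X ^ a - 1 → d ∣ X ^ b - 1 → d ∣ X ^ (Nat.gcd a b) - 1 := by
  intro a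
  induction a using Nat.strong_induction_on with
  | _ a ih =>
    intro b ha hb
    rcases Nat.eq_zero_or_pos a with h0 | h0
    · subst h0; simpa using hb
    · rw [Nat.gcd_rec]
      apply ih (b % a) (Nat.mod_lt _ h0) a _ ha
      -- d ∣ X ^ (b % a) - 1
      have hdiv : (X : Polynomial ℤ) ^ a - 1 ∣ X ^ (a * (b / a)) - 1 := by
        have := sub_dvd_pow_sub_pow ((X : Polynomial ℤ) ^ a) 1 (b / a)
        simpa [← pow_mul] using this
      have key : (X : Polynomial ℤ) ^ b - 1
          = X ^ (b % a) * (X ^ (a * (b / a)) - 1) + (X ^ (b % a) - 1) := by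
        have hb' : (X : Polynomial ℤ) ^ b = X ^ (b % a) * X ^ (a * (b / a)) := by
          rw [← pow_add, Nat.mod_add_div]
        rw [hb']; ring
      have h1 : d ∣ X ^ (b % a) * ((X : Polynomial ℤ) ^ (a * (b / a)) - 1) :=
        (ha.trans hdiv).mul_left _
      have := hb
      rw [key] at this
      exact (dvd_add_right h1).mp this

private lemma g_eval_one (n : ℕ) : (g n).eval 1 = n := by
  unfold g; simp

private lemma isRelPrime_g {a b : ℕ} (ha : 0 < a) (hab : Nat.gcd a b = 1) :
    IsRelPrime (g a) (g b) := by
  intro d hda hdb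
  have hXa : d ∣ X ^ a - 1 := by
    have := one_sub_eq a
    have : d ∣ (1 : Polynomial ℤ) - X ^ a := this ▸ hda.mul_left _
    simpa using this.neg_right
  have hXb : d ∣ X ^ b - 1 := by
    have := one_sub_eq b
    have : d ∣ (1 : Polynomial ℤ) - X ^ b := this ▸ hdb.mul_left _
    simpa using this.neg_right
  have hd1 : d ∣ X - 1 := by
    have := dvd_gcd_pow d a b hXa hXb
    rwa [hab, pow_one] at this
  by_contra hu
  -- d is a nonunit divisor of the prime X - 1, hence X - 1 ∣ d ∣ g a
  have hprime : Prime (X - (1 : Polynomial ℤ)) := by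
    simpa using Polynomial.prime_X_sub_C (1 : ℤ)
  obtain ⟨e, he⟩ := hd1
  have : IsUnit e := (hprime.irreducible.isUnit_or_isUnit he).resolve_left hu
  obtain ⟨u, rfl⟩ := this
  have hdvd : (X - 1 : Polynomial ℤ) ∣ g a := by
    have hXd : (X - 1 : Polynomial ℤ) ∣ d :=
      ⟨(↑u⁻¹ : Polynomial ℤ), by rw [he, mul_assoc, Units.mul_inv, mul_one]⟩
    exact hXd.trans hda
  have : (g a).eval 1 = 0 := by
    have : (X - C (1:ℤ)) ∣ g a := by simpa using hdvd
    exact (Polynomial.dvd_iff_isRoot.mp this)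
  rw [g_eval_one] at this
  exact_mod_cast absurd this (by exact_mod_cast ha.ne')

/-- For pairwise distinct primes `p₁, …, p_s` and positive integers `r₁, …, r_s`, the
intersection of the ideals `(1 - t^{pᵢ^{rᵢ}})` of `ℤ[t]` equals the principal ideal
generated by `(1 - t) * ∏ᵢ (1 + t + ⋯ + t^{pᵢ^{rᵢ} - 1})`. -/
theorem inf_span_one_sub_pow
    (s : ℕ) (hs : 0 < s) (p : Fin s → ℕ) (r : Fin s → ℕ)
    (hp : ∀ i, (p i).Prime) (hr : ∀ i, 0 < r i)
    (hdist : ∀ i j, i ≠ j → p i ≠ p j) :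
    (⨅ i : Fin s, Ideal.span {(1 : Polynomial ℤ) - X ^ (p i ^ r i)})
      = Ideal.span
          {(1 - X) * ∏ i : Fin s, ∑ j ∈ Finset.range (p i ^ r i), (X : Polynomial ℤ) ^ j} := by
  have hn : ∀ i, 0 < p i ^ r i := fun i => pow_pos (hp i).pos _
  have hrel : ∀ i j, i ≠ j → IsRelPrime (g (p i ^ r i)) (g (p j ^ r j)) := fun i j hij =>
    isRelPrime_g (hn i)
      (Nat.Coprime.pow _ _ ((Nat.coprime_primes (hp i) (hp j)).mpr (hdist i j hij)))
  have h1X : (1 : Polynomial ℤ) - X ≠ 0 := by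
    intro h
    have := congrArg (Polynomial.eval 0) h
    simp at this
  ext x
  simp only [Ideal.mem_iInf, Ideal.mem_span_singleton]
  show (∀ i, (1 : Polynomial ℤ) - X ^ (p i ^ r i) ∣ x) ↔
    (1 - X) * ∏ i : Fin s, g (p i ^ r i) ∣ x
  constructor
  · intro h
    have key : ∀ F : Finset (Fin s), F.Nonempty →
        (1 - X) * ∏ i ∈ F, g (p i ^ r i) ∣ x := by
      intro F hF
      induction hF using Finset.Nonempty.cons_induction with
      | singleton a => rw [Finset.prod_singleton, ← one_sub_eq]; exact h a
      | cons a F hmem hF ih =>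
        obtain ⟨y, hy⟩ := h a
        rw [one_sub_eq] at hy
        obtain ⟨z, hz⟩ := ih
        have hdvd : ∏ i ∈ F, g (p i ^ r i) ∣ g (p a ^ r a) * y := by
          have : (1 - X) * ∏ i ∈ F, g (p i ^ r i) ∣
              (1 - X) * (g (p a ^ r a) * y) := by
            rw [← mul_assoc, ← hy]; exact ⟨z, hz⟩
          exact (mul_dvd_mul_iff_left h1X).mp this
        have hrp : IsRelPrime (∏ i ∈ F, g (p i ^ r i)) (g (p a ^ r a)) :=
          IsRelPrime.prod_left fun j hj => hrel j a (fun e => hmem (e ▸ hj))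
        have hy' : ∏ i ∈ F, g (p i ^ r i) ∣ y := hrp.dvd_of_dvd_mul_left hdvd
        rw [Finset.prod_cons]
        obtain ⟨w, hw⟩ := hy'
        exact ⟨w, by rw [hy, hw]; ring⟩
    have := key Finset.univ ⟨⟨0, hs⟩, Finset.mem_univ _⟩
    exact this
  · intro hdvd i
    rw [one_sub_eq]
    exact (mul_dvd_mul_left _ (Finset.dvd_prod_of_mem (fun i => g (p i ^ r i)) (Finset.mem_univ i))).trans hdvd
end

section
/- Let K be an abelian group equipped with a biadditive form χ : K × K → ℤ whose left kernel and right kernel coincide; denote this common kernel by Ker(χ). If the ℚ-vector space (K / Ker(χ)) ⊗_ℤ ℚ is finite-dimensional, then the abelian group K / Ker(χ) is finitely generated. -/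
open TensorProduct

/-- Let `K` be an abelian group with a biadditive form `χ : K × K → ℤ` whose left and right
kernels coincide, and let `N` be this common kernel (an additive subgroup).  If the
`ℚ`-vector space `(K / N) ⊗_ℤ ℚ` is finite dimensional, then the abelian group `K / N` is
finitely generated. -/
theorem quotient_by_kernel_fg
    (K : Type*) [AddCommGroup K] (χ : K →+ K →+ ℤ)
    (hker : {x : K | ∀ y, χ x y = 0} = {y : K | ∀ x, χ x y = 0})
    (N : AddSubgroup K) (hN : (N : Set K) = {x : K | ∀ y, χ x y = 0})
    (hfd : FiniteDimensional ℚ (ℚ ⊗[ℤ] (K ⧸ N))) :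
    AddGroup.FG (K ⧸ N) := by
  classical
  have hmemN : ∀ x : K, x ∈ N ↔ ∀ y, χ x y = 0 := fun x => by
    rw [← SetLike.mem_coe, hN]; exact Iff.rfl
  have hmemN' : ∀ x : K, x ∈ N ↔ ∀ y, χ y x = 0 := fun x => by
    rw [hmemN]; exact Set.ext_iff.mp hker x
  -- descend χ to the quotient
  let χ1 : K →+ (K ⧸ N) →+ ℤ :=
    { toFun := fun x => QuotientAddGroup.lift N (χ x) (fun n hn => (hmemN' n).mp hn x)
      map_zero' := by ext q; simp
      map_add' := fun a b => by ext q; simp; rfl }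
  let χQ : (K ⧸ N) →+ (K ⧸ N) →+ ℤ :=
    QuotientAddGroup.lift N χ1 (fun n hn => by
      ext q
      simp [χ1]; exact (hmemN n).mp hn q)
  have hχQ : ∀ x y : K, χQ (QuotientAddGroup.mk x) (QuotientAddGroup.mk y) = χ x y :=
    fun x y => rfl
  -- bilinear form over ℤ
  let F : (K ⧸ N) →+ ((K ⧸ N) →ₗ[ℤ] ℤ) :=
    { toFun := fun a => (χQ a).toIntLinearMap
      map_zero' := by ext b; simp
      map_add' := fun a b => by ext c; simp }
  let BQ : (K ⧸ N) →ₗ[ℤ] (K ⧸ N) →ₗ[ℤ] ℤ := F.toIntLinearMap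
  let B := LinearMap.BilinForm.baseChange ℚ BQ
  have hB : ∀ a b : K ⧸ N, B ((1:ℚ) ⊗ₜ[ℤ] a) ((1:ℚ) ⊗ₜ[ℤ] b) = (χQ a b : ℚ) := by
    intro a b
    show (BQ a b) • ((1:ℚ) * 1) = _
    simp [BQ, F]
  -- spanning
  have hspan : (⊤ : Submodule ℚ (ℚ ⊗[ℤ] (K ⧸ N))) ≤
      ⨆ z : K ⧸ N, Submodule.span ℚ {(1:ℚ) ⊗ₜ[ℤ] z} := by
    rintro v -
    induction v using TensorProduct.induction_on with
    | zero => exact zero_mem _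
    | tmul q z =>
        have : (q ⊗ₜ[ℤ] z) = q • ((1:ℚ) ⊗ₜ[ℤ] z) := by
          rw [TensorProduct.smul_tmul', smul_eq_mul, mul_one]
        rw [this]
        exact Submodule.smul_mem _ _
          (Submodule.mem_iSup_of_mem z (Submodule.mem_span_singleton_self _))
    | add x y hx hy => exact add_mem hx hy
  have hfg : (⊤ : Submodule ℚ (ℚ ⊗[ℤ] (K ⧸ N))).FG := Module.finite_def.mp inferInstance
  obtain ⟨t, ht⟩ := CompleteLattice.IsCompactElement.exists_finset_of_le_iSup
    (Submodule ℚ (ℚ ⊗[ℤ] (K ⧸ N))) ((Submodule.fg_iff_compact _).mp hfg)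
    (fun z : K ⧸ N => Submodule.span ℚ {(1:ℚ) ⊗ₜ[ℤ] z}) hspan
  -- the injection into ℤ^t
  let g : (K ⧸ N) →ₗ[ℤ] (↥t → ℤ) := LinearMap.pi fun i => BQ.flip (i : K ⧸ N)
  have hginj : Function.Injective g := by
    rw [← LinearMap.ker_eq_bot, LinearMap.ker_eq_bot']
    intro z hz
    have hz' : ∀ i : ↥t, χQ z (i : K ⧸ N) = 0 := fun i => congrFun hz i
    have hBz : ∀ w : K ⧸ N, B ((1:ℚ) ⊗ₜ[ℤ] z) ((1:ℚ) ⊗ₜ[ℤ] w) = 0 := by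
      intro w
      have hle : (⨆ i ∈ t, Submodule.span ℚ {(1:ℚ) ⊗ₜ[ℤ] (i : K ⧸ N)}) ≤
          LinearMap.ker (B ((1:ℚ) ⊗ₜ[ℤ] z)) := by
        refine iSup₂_le fun i hi => ?_
        rw [Submodule.span_singleton_le_iff_mem, LinearMap.mem_ker]
        rw [hB]
        exact_mod_cast hz' ⟨i, hi⟩
      have := hle (ht (Submodule.mem_top (x := (1:ℚ) ⊗ₜ[ℤ] w)))
      exact LinearMap.mem_ker.mp this
    induction z using QuotientAddGroup.induction_on with
    | _ x =>
        rw [QuotientAddGroup.eq_zero_iff]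
        rw [hmemN]
        intro y
        have := hBz (QuotientAddGroup.mk y)
        rw [hB, hχQ] at this
        exact_mod_cast this
  have : Module.Finite ℤ (K ⧸ N) := Module.Finite.of_injective g hginj
  exact Module.Finite.iff_addGroup_fg.mp this
end
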